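/- Let P, P' be two distinct projective planes in ℙ^6 meeting in exactly one point. Then the space of quadratic forms on ℙ^6 vanishing on both P and P' has codimension 5 inside the space of quadratic forms vanishing on P. -/

import Mathlib

open MvPolynomial

/-- The submodule of polynomials vanishing on a subset `s` of `ℂⁿ`. -/
noncomputable def vanishingOn (n : ℕ) (s : Set (Fin n → ℂ)) :
    Submodule ℂ (MvPolynomial (Fin n) ℂ) where
  carrier := {Q | ∀ x ∈ s, MvPolynomial.eval x Q = 0}
  add_mem' := by intro a b ha hb x hx; simp [ha x hx, hb x hx]
  zero_mem' := by intro x hx; simp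
  smul_mem' := by intro c a ha x hx; simp [ha x hx]


noncomputable def mono2 (p : Fin 7 × Fin 7) : Fin 7 →₀ ℕ :=
  Finsupp.single p.1 1 + Finsupp.single p.2 1

lemma mono2_apply (p : Fin 7 × Fin 7) (k : Fin 7) :
    mono2 p k = (if p.1 = k then 1 else 0) + (if p.2 = k then 1 else 0) := by
  simp [mono2, Finsupp.single_apply]

lemma mono2_comm (i j : Fin 7) : mono2 (i, j) = mono2 (j, i) := by
  simp [mono2, add_comm]

lemma degree_eq_sum_univ (d : Fin 7 →₀ ℕ) : d.degree = ∑ i : Fin 7, d i := by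
  rw [Finsupp.degree]
  exact Finset.sum_subset (Finset.subset_univ _) (by
    intro x _ hx
    simpa using (Finsupp.notMem_support_iff.mp hx))

lemma mono2_degree (p : Fin 7 × Fin 7) : (mono2 p).degree = 2 := by
  rw [degree_eq_sum_univ]
  simp [mono2_apply, Finset.sum_add_distrib]

lemma mono2_ne_zero_left (p : Fin 7 × Fin 7) : mono2 p p.1 ≠ 0 := by
  simp [mono2_apply]

lemma mono2_ne_zero_right (p : Fin 7 × Fin 7) : mono2 p p.2 ≠ 0 := by
  simp [mono2_apply]

lemma mono2_eq_zero (p : Fin 7 × Fin 7) {k : Fin 7} (h1 : k ≠ p.1) (h2 : k ≠ p.2) :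
    mono2 p k = 0 := by
  simp [mono2_apply, (Ne.symm h1), (Ne.symm h2)]

lemma mem_of_mono2_ne_zero {p : Fin 7 × Fin 7} {k : Fin 7} (h : mono2 p k ≠ 0) :
    k = p.1 ∨ k = p.2 := by
  by_contra hc
  push_neg at hc
  exact h (mono2_eq_zero p hc.1 hc.2)

lemma deg2_classify {d : Fin 7 →₀ ℕ} (hd : d.degree = 2) :
    ∃ p : Fin 7 × Fin 7, p.1 ≤ p.2 ∧ d = mono2 p := by
  classical
  rw [degree_eq_sum_univ] at hd
  have hne : ∃ i, d i ≠ 0 := by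
    by_contra hc
    push_neg at hc
    simp [hc] at hd
  obtain ⟨i, hi⟩ := hne
  have hsplit : d i + ∑ k ∈ Finset.univ.erase i, d k = 2 := by
    rw [Finset.add_sum_erase _ _ (Finset.mem_univ i)]; exact hd
  have hile : d i ≤ 2 := by omega
  rcases Nat.lt_or_ge (d i) 2 with h2 | h2
  · -- d i = 1
    have hi1 : d i = 1 := by omega
    have hrest : ∑ k ∈ Finset.univ.erase i, d k = 1 := by omega
    have hj : ∃ j ∈ Finset.univ.erase i, d j ≠ 0 := by
      by_contra hc
      push_neg at hc
      rw [Finset.sum_eq_zero hc] at hrest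
      omega
    obtain ⟨j, hjmem, hj0⟩ := hj
    have hji : j ≠ i := Finset.ne_of_mem_erase hjmem
    have hsplit2 : d j + ∑ k ∈ (Finset.univ.erase i).erase j, d k = 1 := by
      rw [Finset.add_sum_erase _ _ hjmem]; exact hrest
    have hj1 : d j = 1 := by omega
    have hzero : ∀ k, k ≠ i → k ≠ j → d k = 0 := by
      intro k hki hkj
      have hk : k ∈ (Finset.univ.erase i).erase j := by
        simp [hki, hkj]
      have : ∑ k ∈ (Finset.univ.erase i).erase j, d k = 0 := by omega
      exact Finset.sum_eq_zero_iff.mp this k hk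
    have hdm : d = mono2 (i, j) := by
      ext k
      rcases eq_or_ne k i with rfl | hki
      · have hji' : ¬ (j = k) := hji
        simp [mono2_apply, hji', hi1]
      · rcases eq_or_ne k j with rfl | hkj
        · have hki' : ¬ (i = k) := fun hc => hki hc.symm
          simp [mono2_apply, hki', hj1]
        · rw [mono2_eq_zero _ hki hkj]
          exact hzero k hki hkj
    rcases le_total i j with hle | hle
    · exact ⟨(i, j), hle, hdm⟩
    · exact ⟨(j, i), hle, by rw [show ((j, i) : Fin 7 × Fin 7) = (j, i) from rfl, ← mono2_comm i j]; exact hdm⟩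
  · -- d i = 2
    have hi2 : d i = 2 := by omega
    refine ⟨(i, i), le_refl _, ?_⟩
    ext k
    rcases eq_or_ne k i with rfl | hki
    · simp [mono2_apply, hi2]
    · rw [mono2_eq_zero _ hki hki]
      have : ∀ k, k ≠ i → d k = 0 := by
        intro k hk
        have hk' : k ∈ Finset.univ.erase i := by simp [hk]
        have : ∑ k ∈ Finset.univ.erase i, d k = 0 := by omega
        exact Finset.sum_eq_zero_iff.mp this k hk'
      exact this k hki

lemma mono2_inj {p q : Fin 7 × Fin 7} (hp : p.1 ≤ p.2) (hq : q.1 ≤ q.2)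
    (h : mono2 p = mono2 q) : p = q := by
  have h1 : p.1 = q.1 ∨ p.1 = q.2 := mem_of_mono2_ne_zero (h ▸ mono2_ne_zero_left p)
  have h2 : p.2 = q.1 ∨ p.2 = q.2 := mem_of_mono2_ne_zero (h ▸ mono2_ne_zero_right p)
  have h3 : q.1 = p.1 ∨ q.1 = p.2 := mem_of_mono2_ne_zero (h ▸ mono2_ne_zero_left q)
  have h4 : q.2 = p.1 ∨ q.2 = p.2 := mem_of_mono2_ne_zero (h ▸ mono2_ne_zero_right q)
  have hp' := Fin.le_def.mp hp
  have hq' := Fin.le_def.mp hq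
  have h1' := h1.imp (congrArg Fin.val) (congrArg Fin.val)
  have h2' := h2.imp (congrArg Fin.val) (congrArg Fin.val)
  have h3' := h3.imp (congrArg Fin.val) (congrArg Fin.val)
  have h4' := h4.imp (congrArg Fin.val) (congrArg Fin.val)
  have hv : p.1.val = q.1.val ∧ p.2.val = q.2.val := by omega
  exact Prod.ext_iff.mpr ⟨Fin.val_injective hv.1, Fin.val_injective hv.2⟩
-- part 2 (appended to p1 content when testing)
noncomputable def coordSpan (A : Set (Fin 7)) : Submodule ℂ (Fin 7 → ℂ) :=
  Submodule.span ℂ ((fun i => Pi.single i (1:ℂ)) '' A)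

lemma coordSpan_apply_eq_zero {A : Set (Fin 7)} {x : Fin 7 → ℂ}
    (hx : x ∈ coordSpan A) {j : Fin 7} (hj : j ∉ A) : x j = 0 := by
  have hle : coordSpan A ≤ LinearMap.ker (LinearMap.proj j (R := ℂ) (φ := fun _ : Fin 7 => ℂ)) := by
    rw [coordSpan, Submodule.span_le]
    rintro y ⟨i, hi, rfl⟩
    have hij : j ≠ i := fun hc => hj (hc ▸ hi)
    simp [LinearMap.mem_ker, Pi.single_apply, hij]
  simpa using hle hx

lemma mem_vanishingOn {s : Set (Fin 7 → ℂ)} {Q : MvPolynomial (Fin 7) ℂ} :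
    Q ∈ vanishingOn 7 s ↔ ∀ x ∈ s, eval x Q = 0 := Iff.rfl

lemma vanishingOn_union (s t : Set (Fin 7 → ℂ)) :
    vanishingOn 7 (s ∪ t) = vanishingOn 7 s ⊓ vanishingOn 7 t := by
  ext Q
  simp only [mem_vanishingOn, Submodule.mem_inf]
  constructor
  · exact fun h => ⟨fun x hx => h x (Or.inl hx), fun x hx => h x (Or.inr hx)⟩
  · rintro ⟨h1, h2⟩ x (hx | hx)
    · exact h1 x hx
    · exact h2 x hx

lemma eval_monomial_zero {A : Set (Fin 7)} {x : Fin 7 → ℂ} (hx : x ∈ coordSpan A)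
    {d : Fin 7 →₀ ℕ} {c : ℂ} {j : Fin 7} (hj : j ∉ A) (hdj : d j ≠ 0) :
    eval x (monomial d c) = 0 := by
  rw [eval_monomial]
  have hmem : j ∈ d.support := Finsupp.mem_support_iff.mpr hdj
  have : (d.prod fun n e => x n ^ e) = 0 := by
    apply Finset.prod_eq_zero hmem
    show x j ^ d j = 0
    rw [coordSpan_apply_eq_zero hx hj]
    exact zero_pow hdj
  rw [this, mul_zero]

lemma degree_of_mem_support {Q : MvPolynomial (Fin 7) ℂ}
    (hQ : Q ∈ homogeneousSubmodule (Fin 7) ℂ 2) {d : Fin 7 →₀ ℕ} (hd : d ∈ Q.support) :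
    d.degree = 2 := by
  rw [mem_homogeneousSubmodule] at hQ
  by_contra hc
  exact (MvPolynomial.mem_support_iff.mp hd) (hQ.coeff_eq_zero hc)

lemma sum_ite_coeff (Q : MvPolynomial (Fin 7) ℂ) (m : Fin 7 →₀ ℕ) :
    (∑ d ∈ Q.support, if d = m then coeff d Q else 0) = coeff m Q := by
  rw [Finset.sum_ite_eq' Q.support m (fun d => coeff d Q)]
  by_cases h : m ∈ Q.support
  · rw [if_pos h]
  · rw [if_neg h, MvPolynomial.notMem_support_iff.mp h]

lemma mono2_diag (i : Fin 7) : mono2 (i, i) = Finsupp.single i 2 := by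
  rw [mono2, ← Finsupp.single_add]

lemma coeff_diag_eq_zero {A : Set (Fin 7)} {Q : MvPolynomial (Fin 7) ℂ}
    (hQ : Q ∈ homogeneousSubmodule (Fin 7) ℂ 2)
    (hv : Q ∈ vanishingOn 7 (coordSpan A)) {i : Fin 7} (hi : i ∈ A) :
    coeff (mono2 (i, i)) Q = 0 := by
  have hxmem : (Pi.single i (1:ℂ)) ∈ coordSpan A :=
    Submodule.subset_span ⟨i, hi, rfl⟩
  have h := hv _ hxmem
  rw [eval_eq] at h
  rw [← sum_ite_coeff Q (mono2 (i, i))]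
  refine Eq.trans (Finset.sum_congr rfl ?_) h
  intro d hd
  have hdeg := degree_of_mem_support hQ hd
  by_cases hcase : d = mono2 (i, i)
  · rw [if_pos hcase]
    conv_rhs => rw [hcase, mono2_diag]
    rw [Finsupp.support_single_ne_zero i (two_ne_zero)]
    rw [Finset.prod_singleton]
    rw [hcase, mono2_diag]
    simp
  · rw [if_neg hcase]
    symm
    -- there is k in support of d with k ≠ i
    have hk : ∃ k ∈ d.support, k ≠ i := by
      by_contra hc
      push_neg at hc
      have hsub : d.support ⊆ {i} := fun k hk => Finset.mem_singleton.mpr (hc k hk)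
      have hd' : d = Finsupp.single i (d i) := Finsupp.support_subset_singleton.mp hsub
      have : d i = 2 := by
        have := hdeg
        rw [hd'] at this
        rw [degree_eq_sum_univ] at this
        simpa [Finsupp.single_apply] using this
      apply hcase
      rw [hd', this, mono2_diag]
    obtain ⟨k, hkmem, hki⟩ := hk
    have : (∏ l ∈ d.support, Pi.single i (1:ℂ) l ^ d l) = (0:ℂ) := by
      apply Finset.prod_eq_zero hkmem
      rw [Pi.single_apply, if_neg hki]
      exact zero_pow (Finsupp.mem_support_iff.mp hkmem)
    rw [this, mul_zero]

lemma coeff_eq_zero_of_vanishing {A : Set (Fin 7)} {Q : MvPolynomial (Fin 7) ℂ}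
    (hQ : Q ∈ homogeneousSubmodule (Fin 7) ℂ 2)
    (hv : Q ∈ vanishingOn 7 (coordSpan A)) {i j : Fin 7} (hi : i ∈ A) (hj : j ∈ A) :
    coeff (mono2 (i, j)) Q = 0 := by
  rcases eq_or_ne i j with rfl | hij
  · exact coeff_diag_eq_zero hQ hv hi
  -- off-diagonal
  set x : Fin 7 → ℂ := Pi.single i 1 + Pi.single j 1 with hxdef
  have hxval : ∀ k, x k = if k = i ∨ k = j then 1 else 0 := by
    intro k
    rcases eq_or_ne k i with rfl | hki
    · simp [hxdef, Pi.single_apply, Ne.symm hij]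
    · rcases eq_or_ne k j with rfl | hkj
      · simp [hxdef, Pi.single_apply, hki]
      · simp [hxdef, Pi.single_apply, hki, hkj]
  have hxmem : x ∈ coordSpan A :=
    Submodule.add_mem _ (Submodule.subset_span ⟨i, hi, rfl⟩) (Submodule.subset_span ⟨j, hj, rfl⟩)
  have h := hv _ hxmem
  rw [eval_eq] at h
  have hsum : (∑ d ∈ Q.support, coeff d Q * ∏ l ∈ d.support, x l ^ d l)
      = (∑ d ∈ Q.support, if d = mono2 (i, i) then coeff d Q else 0)
      + (∑ d ∈ Q.support, if d = mono2 (j, j) then coeff d Q else 0)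
      + (∑ d ∈ Q.support, if d = mono2 (i, j) then coeff d Q else 0) := by
    rw [← Finset.sum_add_distrib, ← Finset.sum_add_distrib]
    apply Finset.sum_congr rfl
    intro d hd
    have hdeg := degree_of_mem_support hQ hd
    by_cases hsub : ∀ k ∈ d.support, k = i ∨ k = j
    · -- d is supported in {i, j}
      have hprod : (∏ l ∈ d.support, x l ^ d l) = 1 := by
        apply Finset.prod_eq_one
        intro l hl
        rw [hxval l, if_pos (hsub l hl)]
        exact one_pow _
      rw [hprod, mul_one]
      -- d = single i (d i) + single j (d j)
      have hdij : d = Finsupp.single i (d i) + Finsupp.single j (d j) := by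
        ext k
        rcases eq_or_ne k i with rfl | hki
        · simp [Finsupp.single_apply, Ne.symm hij]
        · rcases eq_or_ne k j with rfl | hkj
          · simp [Finsupp.single_apply, hki, Ne.symm hki]
          · have hk0 : d k = 0 := by
              by_contra hc
              rcases hsub k (Finsupp.mem_support_iff.mpr hc) with h' | h'
              · exact hki h'
              · exact hkj h'
            simp [Finsupp.single_apply, Ne.symm hki, Ne.symm hkj, hk0]
      have hsum2 : d i + d j = 2 := by
        have := hdeg
        rw [degree_eq_sum_univ] at this
        rw [hdij] at this
        simp only [Finsupp.add_apply, Finsupp.single_apply] at this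
        rw [Finset.sum_add_distrib] at this
        simpa [Finset.sum_ite_eq, Ne.symm hij] using this
      -- identify d among the three
      have hd_ne : ∀ (a b a' b' : Fin 7) (k : Fin 7),
          mono2 (a, b) k ≠ mono2 (a', b') k → mono2 (a, b) ≠ mono2 (a', b') :=
        fun a b a' b' k hk hc => hk (by rw [hc])
      have hcases : (d i = 2 ∧ d j = 0) ∨ (d i = 0 ∧ d j = 2) ∨ (d i = 1 ∧ d j = 1) := by omega
      have hij' : ¬ (j = i) := fun hc => hij hc.symm
      rcases hcases with ⟨h1, h2⟩ | ⟨h1, h2⟩ | ⟨h1, h2⟩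
      · have hdeq : d = mono2 (i, i) := by
          have : mono2 (i, i) = Finsupp.single i (d i) + Finsupp.single j (d j) := by
            rw [h1, h2, Finsupp.single_zero, add_zero, mono2_diag]
          rw [hdij, ← this]
        rw [if_pos hdeq, if_neg, if_neg, add_zero, add_zero]
        · rw [hdeq]
          exact hd_ne i i i j j (by simp [mono2_apply, hij', hij])
        · rw [hdeq]
          exact hd_ne i i j j i (by simp [mono2_apply, hij', hij])
      · have hdeq : d = mono2 (j, j) := by
          have : mono2 (j, j) = Finsupp.single i (d i) + Finsupp.single j (d j) := by
            rw [h1, h2, Finsupp.single_zero, zero_add, mono2_diag]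
          rw [hdij, ← this]
        rw [if_neg, if_pos hdeq, if_neg, add_zero, zero_add]
        · rw [hdeq]
          exact hd_ne j j i j i (by simp [mono2_apply, hij', hij])
        · rw [hdeq]
          exact hd_ne j j i i i (by simp [mono2_apply, hij', hij])
      · have hdeq : d = mono2 (i, j) := by
          have : mono2 (i, j) = Finsupp.single i (d i) + Finsupp.single j (d j) := by
            rw [h1, h2]; rfl
          rw [hdij, ← this]
        rw [if_neg, if_neg, if_pos hdeq, zero_add, zero_add]
        · rw [hdeq]
          exact hd_ne i j j j i (by simp [mono2_apply, hij', hij])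
        · rw [hdeq]
          exact hd_ne i j i i j (by simp [mono2_apply, hij', hij])
    · push_neg at hsub
      obtain ⟨k, hkmem, hki, hkj⟩ := hsub
      have hprod : (∏ l ∈ d.support, x l ^ d l) = 0 := by
        apply Finset.prod_eq_zero hkmem
        rw [hxval k, if_neg (by tauto)]
        exact zero_pow (Finsupp.mem_support_iff.mp hkmem)
      rw [hprod, mul_zero]
      have h1 : d ≠ mono2 (i, i) := by
        intro hc; rw [hc] at hkmem
        rcases mem_of_mono2_ne_zero (Finsupp.mem_support_iff.mp hkmem) with h' | h' <;> exact hki h'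
      have h2 : d ≠ mono2 (j, j) := by
        intro hc; rw [hc] at hkmem
        rcases mem_of_mono2_ne_zero (Finsupp.mem_support_iff.mp hkmem) with h' | h' <;> exact hkj h'
      have h3 : d ≠ mono2 (i, j) := by
        intro hc; rw [hc] at hkmem
        rcases mem_of_mono2_ne_zero (Finsupp.mem_support_iff.mp hkmem) with h' | h'
        · exact hki h'
        · exact hkj h'
      rw [if_neg h1, if_neg h2, if_neg h3]
      simp
  rw [hsum] at h
  rw [sum_ite_coeff, sum_ite_coeff, sum_ite_coeff] at h
  rw [coeff_diag_eq_zero hQ hv hi, coeff_diag_eq_zero hQ hv hj] at h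
  simpa using h
lemma monomial_mem_homog (p : Fin 7 × Fin 7) (c : ℂ) :
    monomial (mono2 p) c ∈ homogeneousSubmodule (Fin 7) ℂ 2 := by
  rw [mem_homogeneousSubmodule]
  exact isHomogeneous_monomial c (mono2_degree p)

lemma struct (A B : Finset (Fin 7)) :
    (homogeneousSubmodule (Fin 7) ℂ 2 ⊓
        vanishingOn 7 (↑(coordSpan ↑A) ∪ ↑(coordSpan ↑B)) : Submodule ℂ _)
    = Submodule.span ℂ ((fun p => (monomial (mono2 p) (1:ℂ))) ''
        ↑(Finset.univ.filter (fun p : Fin 7 × Fin 7 =>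
          p.1 ≤ p.2 ∧ ¬(p.1 ∈ A ∧ p.2 ∈ A) ∧ ¬(p.1 ∈ B ∧ p.2 ∈ B)))) := by
  apply le_antisymm
  · intro Q hQ
    obtain ⟨hh, hv⟩ := hQ
    rw [vanishingOn_union] at hv
    simp only [SetLike.mem_coe, Submodule.mem_inf] at hv
    obtain ⟨hvA, hvB⟩ := hv
    rw [← support_sum_monomial_coeff Q]
    apply Submodule.sum_mem
    intro d hd
    have hdeg := degree_of_mem_support hh hd
    obtain ⟨p, hple, rfl⟩ := deg2_classify hdeg
    have hcoeff : coeff (mono2 p) Q ≠ 0 := MvPolynomial.mem_support_iff.mp hd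
    have hp : p ∈ Finset.univ.filter (fun p : Fin 7 × Fin 7 =>
        p.1 ≤ p.2 ∧ ¬(p.1 ∈ A ∧ p.2 ∈ A) ∧ ¬(p.1 ∈ B ∧ p.2 ∈ B)) := by
      rw [Finset.mem_filter]
      refine ⟨Finset.mem_univ _, hple, ?_, ?_⟩
      · rintro ⟨h1, h2⟩
        exact hcoeff (coeff_eq_zero_of_vanishing hh hvA (by simpa using h1) (by simpa using h2))
      · rintro ⟨h1, h2⟩
        exact hcoeff (coeff_eq_zero_of_vanishing hh hvB (by simpa using h1) (by simpa using h2))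
    have : monomial (mono2 p) (coeff (mono2 p) Q)
        = (coeff (mono2 p) Q) • monomial (mono2 p) (1:ℂ) := by
      rw [MvPolynomial.smul_monomial, smul_eq_mul, mul_one]
    rw [this]
    exact Submodule.smul_mem _ _ (Submodule.subset_span ⟨p, by simpa using hp, rfl⟩)
  · rw [Submodule.span_le]
    rintro _ ⟨p, hp, rfl⟩
    rw [Finset.mem_coe, Finset.mem_filter] at hp
    obtain ⟨-, hple, hA, hB⟩ := hp
    refine ⟨monomial_mem_homog p 1, ?_⟩
    rw [vanishingOn_union]
    simp only [SetLike.mem_coe, Submodule.mem_inf]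
    constructor
    · intro x hx
      rcases Decidable.not_and_iff_or_not.mp hA with h | h
      · exact eval_monomial_zero hx (by simpa using h) (mono2_ne_zero_left p)
      · exact eval_monomial_zero hx (by simpa using h) (mono2_ne_zero_right p)
    · intro x hx
      rcases Decidable.not_and_iff_or_not.mp hB with h | h
      · exact eval_monomial_zero hx (by simpa using h) (mono2_ne_zero_left p)
      · exact eval_monomial_zero hx (by simpa using h) (mono2_ne_zero_right p)

lemma finrank_span_mono2 (T : Finset (Fin 7 × Fin 7)) (hT : ∀ p ∈ T, p.1 ≤ p.2) :
    Module.finrank ℂ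
      (Submodule.span ℂ ((fun p => (monomial (mono2 p) (1:ℂ))) '' ↑T)) = T.card := by
  classical
  have hinj : Function.Injective (fun p : ↥T => mono2 p.1) := by
    rintro ⟨p, hp⟩ ⟨q, hq⟩ h
    exact Subtype.ext (mono2_inj (hT p hp) (hT q hq) h)
  have hli : LinearIndependent ℂ (fun p : ↥T => monomial (mono2 (p : Fin 7 × Fin 7)) (1:ℂ)) := by
    have := (MvPolynomial.basisMonomials (Fin 7) ℂ).linearIndependent.comp _ hinj
    simp only [Function.comp_def, MvPolynomial.coe_basisMonomials] at this
    exact this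
  have hrange : (fun p => (monomial (mono2 p) (1:ℂ))) '' ↑T
      = Set.range (fun p : ↥T => monomial (mono2 (p : Fin 7 × Fin 7)) (1:ℂ)) := by
    ext y
    simp only [Set.mem_image, Set.mem_range, Finset.mem_coe]
    constructor
    · rintro ⟨p, hp, rfl⟩; exact ⟨⟨p, hp⟩, rfl⟩
    · rintro ⟨⟨p, hp⟩, rfl⟩; exact ⟨p, hp, rfl⟩
  rw [hrange, finrank_span_eq_card hli, Fintype.card_coe]

lemma card22 : (Finset.univ.filter (fun p : Fin 7 × Fin 7 =>
    p.1 ≤ p.2 ∧ ¬(p.1 ∈ ({0,1,2} : Finset (Fin 7)) ∧ p.2 ∈ ({0,1,2} : Finset (Fin 7)))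
      ∧ ¬(p.1 ∈ ({0,1,2} : Finset (Fin 7)) ∧ p.2 ∈ ({0,1,2} : Finset (Fin 7))))).card = 22 := by
  decide

lemma card17 : (Finset.univ.filter (fun p : Fin 7 × Fin 7 =>
    p.1 ≤ p.2 ∧ ¬(p.1 ∈ ({0,1,2} : Finset (Fin 7)) ∧ p.2 ∈ ({0,1,2} : Finset (Fin 7)))
      ∧ ¬(p.1 ∈ ({0,3,4} : Finset (Fin 7)) ∧ p.2 ∈ ({0,3,4} : Finset (Fin 7))))).card = 17 := by
  decide
noncomputable def subst (f : (Fin 7 → ℂ) →ₗ[ℂ] (Fin 7 → ℂ)) :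
    MvPolynomial (Fin 7) ℂ →ₐ[ℂ] MvPolynomial (Fin 7) ℂ :=
  aeval (fun i => ∑ j, C (f (Pi.single j 1) i) * X j)

lemma eval_subst (f : (Fin 7 → ℂ) →ₗ[ℂ] (Fin 7 → ℂ)) (x : Fin 7 → ℂ)
    (Q : MvPolynomial (Fin 7) ℂ) : eval x (subst f Q) = eval (f x) Q := by
  rw [subst, aeval_def, MvPolynomial.algebraMap_eq, eval₂_comp_left (eval x) C _ Q]
  have h1 : (eval x).comp C = RingHom.id ℂ := by
    ext r
    simp
  have h2 : (eval x) ∘ (fun i => ∑ j, C (f (Pi.single j 1) i) * X j) = f x := by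
    funext i
    have := LinearMap.pi_apply_eq_sum_univ ((LinearMap.proj i).comp f) x
    simp only [LinearMap.comp_apply, LinearMap.proj_apply] at this
    rw [Function.comp_apply]
    rw [show f x i = ((LinearMap.proj i : ((Fin 7 → ℂ) →ₗ[ℂ] ℂ)).comp f) x from rfl] at this ⊢
    rw [this]
    simp only [map_sum, map_mul, eval_C, eval_X]
    apply Finset.sum_congr rfl
    intro j _
    have hsingle : (fun k => if j = k then (1:ℂ) else 0) = Pi.single j 1 := by
      funext k
      rw [Pi.single_apply]
      simp [eq_comm]
    rw [hsingle, smul_eq_mul]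
    ring
  rw [h1, h2]
  rfl

lemma subst_subst (f g : (Fin 7 → ℂ) →ₗ[ℂ] (Fin 7 → ℂ)) (Q : MvPolynomial (Fin 7) ℂ) :
    subst f (subst g Q) = subst (g ∘ₗ f) Q := by
  apply MvPolynomial.funext
  intro x
  rw [eval_subst, eval_subst, eval_subst]
  rfl

lemma subst_id (Q : MvPolynomial (Fin 7) ℂ) : subst (LinearMap.id) Q = Q := by
  apply MvPolynomial.funext
  intro x
  rw [eval_subst]
  rfl

lemma subst_isHomogeneous {Q : MvPolynomial (Fin 7) ℂ}
    (h : Q ∈ homogeneousSubmodule (Fin 7) ℂ 2) (f : (Fin 7 → ℂ) →ₗ[ℂ] (Fin 7 → ℂ)) :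
    subst f Q ∈ homogeneousSubmodule (Fin 7) ℂ 2 := by
  have hg : ∀ i, (∑ j, C (f (Pi.single j 1) i) * X j : MvPolynomial (Fin 7) ℂ).IsHomogeneous 1 := by
    intro i
    apply MvPolynomial.IsHomogeneous.sum
    intro j _
    have := (isHomogeneous_X ℂ j : IsHomogeneous (X j : MvPolynomial (Fin 7) ℂ) 1)
    simpa using this.C_mul (f (Pi.single j 1) i)
  rw [← support_sum_monomial_coeff Q, map_sum]
  apply Submodule.sum_mem
  intro d hd
  have hdeg := degree_of_mem_support h hd
  rw [subst, aeval_monomial, mem_homogeneousSubmodule]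
  have hC : (algebraMap ℂ (MvPolynomial (Fin 7) ℂ)) (coeff d Q) = C (coeff d Q) := rfl
  rw [hC]
  have hprod : (d.prod fun i k => (∑ j, C (f (Pi.single j 1) i) * X j : MvPolynomial (Fin 7) ℂ) ^ k).IsHomogeneous 2 := by
    rw [Finsupp.prod]
    have := MvPolynomial.IsHomogeneous.prod d.support
      (fun i => (∑ j, C (f (Pi.single j 1) i) * X j : MvPolynomial (Fin 7) ℂ) ^ d i)
      (fun i => d i) (fun i _ => by simpa using (hg i).pow (d i))
    rw [show (∑ i ∈ d.support, d i) = 2 from hdeg] at this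
    exact this
  simpa using (isHomogeneous_C (Fin 7) (coeff d Q)).mul hprod

lemma finrank_inf_vanishing_image (e : (Fin 7 → ℂ) ≃ₗ[ℂ] (Fin 7 → ℂ)) (s : Set (Fin 7 → ℂ)) :
    Module.finrank ℂ
      (homogeneousSubmodule (Fin 7) ℂ 2 ⊓ vanishingOn 7 (⇑e '' s) : Submodule ℂ _)
    = Module.finrank ℂ
      (homogeneousSubmodule (Fin 7) ℂ 2 ⊓ vanishingOn 7 s : Submodule ℂ _) := by
  have hcomp1 : ∀ Q, subst e.toLinearMap (subst e.symm.toLinearMap Q) = Q := by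
    intro Q
    rw [subst_subst]
    have : (e.symm.toLinearMap ∘ₗ e.toLinearMap) = LinearMap.id := by
      ext x
      simp
    rw [this, subst_id]
  have hcomp2 : ∀ Q, subst e.symm.toLinearMap (subst e.toLinearMap Q) = Q := by
    intro Q
    rw [subst_subst]
    have : (e.toLinearMap ∘ₗ e.symm.toLinearMap) = LinearMap.id := by
      ext x
      simp
    rw [this, subst_id]
  let Ψ : MvPolynomial (Fin 7) ℂ ≃ₗ[ℂ] MvPolynomial (Fin 7) ℂ :=
    LinearEquiv.ofLinear (subst e.toLinearMap).toLinearMap (subst e.symm.toLinearMap).toLinearMap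
      (LinearMap.ext hcomp1) (LinearMap.ext hcomp2)
  have hmap : (homogeneousSubmodule (Fin 7) ℂ 2 ⊓ vanishingOn 7 (⇑e '' s)).map
      (Ψ : MvPolynomial (Fin 7) ℂ →ₗ[ℂ] MvPolynomial (Fin 7) ℂ)
      = homogeneousSubmodule (Fin 7) ℂ 2 ⊓ vanishingOn 7 s := by
    ext Q
    rw [Submodule.mem_map_equiv]
    have hΨsymm : Ψ.symm Q = subst e.symm.toLinearMap Q := rfl
    rw [hΨsymm, Submodule.mem_inf, Submodule.mem_inf]
    constructor
    · rintro ⟨h1, h2⟩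
      constructor
      · have := subst_isHomogeneous h1 e.toLinearMap
        rwa [hcomp1] at this
      · intro x hx
        have := h2 (e x) ⟨x, hx, rfl⟩
        rw [eval_subst] at this
        simpa using this
    · rintro ⟨h1, h2⟩
      constructor
      · exact subst_isHomogeneous h1 e.symm.toLinearMap
      · rintro y ⟨x, hx, rfl⟩
        rw [eval_subst]
        simpa using h2 x hx
  rw [← hmap]
  exact (LinearEquiv.finrank_map_eq Ψ _).symm
set_option maxHeartbeats 1000000 in
set_option synthInstance.maxHeartbeats 200000 in
lemma range_fin_two {α : Type*} (f : Fin 2 → α) : Set.range f = {f 0, f 1} := by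
  ext y
  constructor
  · rintro ⟨i, rfl⟩
    fin_cases i
    · exact Set.mem_insert _ _
    · exact Set.mem_insert_of_mem _ rfl
  · intro h
    rcases h with h | h
    · exact ⟨0, h.symm⟩
    · exact ⟨1, (Set.mem_singleton_iff.mp h).symm⟩

lemma span_pair_of_finrank_two {M : Type*} [AddCommGroup M] [Module ℂ M]
    [FiniteDimensional ℂ M] (P : Submodule ℂ M) (hP : Module.finrank ℂ P = 2) :
    ∃ u1 u2, u1 ∈ P ∧ u2 ∈ P ∧ P = Submodule.span ℂ {u1, u2} := by
  let bP := Module.finBasisOfFinrankEq ℂ ↥P hP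
  refine ⟨↑(bP 0), ↑(bP 1), (bP 0).2, (bP 1).2, ?_⟩
  have h1 : P = Submodule.map P.subtype ⊤ := (Submodule.map_subtype_top P).symm
  conv_lhs => rw [h1, ← Module.Basis.span_eq bP]
  rw [Submodule.map_span]
  congr 1
  rw [← Set.range_comp, range_fin_two]
  rfl

set_option maxHeartbeats 1000000 in
set_option synthInstance.maxHeartbeats 200000 in
lemma exists_span_triple (U : Submodule ℂ (Fin 7 → ℂ)) (hU : Module.finrank ℂ U = 3)
    (v0 : Fin 7 → ℂ) (hv0 : v0 ∈ U) (hv0ne : v0 ≠ 0) :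
    ∃ x1 x2, x1 ∈ U ∧ x2 ∈ U ∧ U = Submodule.span ℂ {v0, x1, x2} := by
  have hle : Submodule.span ℂ {v0} ≤ U := by
    rw [Submodule.span_le]
    simpa using hv0
  set I' := (Submodule.span ℂ {v0}).comap U.subtype with hI'
  obtain ⟨J, hJ⟩ := Submodule.exists_isCompl I'
  have h1 : Module.finrank ℂ I' = 1 := by
    rw [(Submodule.comapSubtypeEquivOfLe hle).finrank_eq]
    exact finrank_span_singleton hv0ne
  have hsum := Submodule.finrank_add_eq_of_isCompl hJ
  rw [h1, hU] at hsum
  have hJ2 : Module.finrank ℂ J = 2 := by omega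
  obtain ⟨u1, u2, _, _, hJspan⟩ := span_pair_of_finrank_two J hJ2
  refine ⟨↑u1, ↑u2, u1.2, u2.2, ?_⟩
  have hU' : U = Submodule.map U.subtype ⊤ := (Submodule.map_subtype_top U).symm
  conv_lhs => rw [hU', ← hJ.sup_eq_top]
  rw [Submodule.map_sup, hI', Submodule.map_comap_subtype]
  have hinf : U ⊓ Submodule.span ℂ {v0} = Submodule.span ℂ {v0} := inf_eq_right.mpr hle
  rw [hinf, hJspan, Submodule.map_span, Set.image_insert_eq, Set.image_singleton,
    ← Submodule.span_union, Set.singleton_union]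
  rfl

set_option maxHeartbeats 2000000 in
set_option synthInstance.maxHeartbeats 400000 in
theorem stmt_5' (W W' : Submodule ℂ (Fin 7 → ℂ))
    (hW : Module.finrank ℂ W = 3) (hW' : Module.finrank ℂ W' = 3) (hne : W ≠ W')
    (hint : Module.finrank ℂ ↥(W ⊓ W') = 1) :
    Module.finrank ℂ
        ((homogeneousSubmodule (Fin 7) ℂ 2) ⊓ vanishingOn 7 (↑W) : Submodule ℂ _) =
      Module.finrank ℂ
        ((homogeneousSubmodule (Fin 7) ℂ 2) ⊓ vanishingOn 7 (↑W ∪ ↑W') : Submodule ℂ _)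
        + 5 := by
  classical
  -- a nonzero vector in the intersection
  let bI := Module.finBasisOfFinrankEq ℂ ↥(W ⊓ W') hint
  set v0 : Fin 7 → ℂ := ↑(bI 0) with hv0def
  have hv0I : v0 ∈ W ⊓ W' := (bI 0).2
  have hv0ne : v0 ≠ 0 := fun hc => bI.ne_zero 0 (Submodule.coe_eq_zero.mp hc)
  obtain ⟨x1, x2, hx1, hx2, hWspan⟩ :=
    exists_span_triple W hW v0 hv0I.1 hv0ne
  obtain ⟨y1, y2, hy1, hy2, hW'span⟩ :=
    exists_span_triple W' hW' v0 hv0I.2 hv0ne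
  -- the five-element family spans W ⊔ W' which has dimension 5
  set v : Fin 5 → (Fin 7 → ℂ) := ![v0, x1, x2, y1, y2] with hvdef
  have hrangev : Set.range v = {v0, x1, x2, y1, y2} := by
    rw [hvdef]
    ext z
    simp only [Matrix.range_cons, Matrix.range_empty, Set.union_empty, Set.mem_union,
      Set.mem_singleton_iff, Set.mem_insert_iff, Set.mem_setOf_eq]
    all_goals tauto
  have hsupspan : Submodule.span ℂ (Set.range v) = W ⊔ W' := by
    rw [hrangev]
    have hsets : ({v0, x1, x2, y1, y2} : Set (Fin 7 → ℂ))
        = ({v0, x1, x2} : Set (Fin 7 → ℂ)) ∪ {v0, y1, y2} := by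
      ext z
      simp only [Set.mem_insert_iff, Set.mem_singleton_iff, Set.mem_union]
      all_goals tauto
    rw [hsets, Submodule.span_union, ← hWspan, ← hW'span]
  have hrank5 : Module.finrank ℂ ↥(W ⊔ W') = 5 := by
    have := Submodule.finrank_sup_add_finrank_inf_eq W W'
    rw [hW, hW', hint] at this
    omega
  -- complement of W ⊔ W'
  obtain ⟨U', hU'⟩ := Submodule.exists_isCompl (W ⊔ W')
  have hrankU' : Module.finrank ℂ U' = 2 := by
    have := Submodule.finrank_add_eq_of_isCompl hU'
    rw [hrank5] at this
    have h7 : Module.finrank ℂ (Fin 7 → ℂ) = 7 := by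
      rw [Module.finrank_pi]
      simp
    omega
  obtain ⟨u1, u2, hu1, hu2, hU'span⟩ := span_pair_of_finrank_two U' hrankU'
  -- the seven-element basis
  set w : Fin 7 → (Fin 7 → ℂ) := ![v0, x1, x2, y1, y2, u1, u2] with hwdef
  have hrangew : Set.range w = {v0, x1, x2, y1, y2, u1, u2} := by
    rw [hwdef]
    ext z
    simp only [Matrix.range_cons, Matrix.range_empty, Set.union_empty, Set.mem_union,
      Set.mem_singleton_iff, Set.mem_insert_iff, Set.mem_setOf_eq]
    all_goals tauto
  have hspan7 : Submodule.span ℂ (Set.range w) = ⊤ := by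
    rw [hrangew]
    have hsets : ({v0, x1, x2, y1, y2, u1, u2} : Set (Fin 7 → ℂ))
        = ({v0, x1, x2, y1, y2} : Set (Fin 7 → ℂ)) ∪ {u1, u2} := by
      ext z
      simp only [Set.mem_insert_iff, Set.mem_singleton_iff, Set.mem_union]
      all_goals tauto
    rw [hsets, Submodule.span_union, ← hrangev, hsupspan, ← hU'span]
    exact hU'.sup_eq_top
  have hli7 : LinearIndependent ℂ w := by
    rw [linearIndependent_iff_card_eq_finrank_span]
    show Fintype.card (Fin 7) = Module.finrank ℂ (Submodule.span ℂ (Set.range w))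
    rw [hspan7, finrank_top, Module.finrank_pi]
  let b : Module.Basis (Fin 7) ℂ (Fin 7 → ℂ) := Module.Basis.mk hli7 (le_of_eq hspan7.symm)
  let e : (Fin 7 → ℂ) ≃ₗ[ℂ] (Fin 7 → ℂ) := (Pi.basisFun ℂ (Fin 7)).equiv b (Equiv.refl _)
  have he : ∀ i, e (Pi.single i 1) = w i := by
    intro i
    rw [← Pi.basisFun_apply]
    show (Pi.basisFun ℂ (Fin 7)).equiv b (Equiv.refl _) ((Pi.basisFun ℂ (Fin 7)) i) = w i
    rw [Module.Basis.equiv_apply, Equiv.refl_apply]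
    exact Module.Basis.mk_apply hli7 (le_of_eq hspan7.symm) i
  have himage : ∀ (A : Finset (Fin 7)),
      ⇑e '' ↑(coordSpan ↑A) = ↑(Submodule.span ℂ (w '' ↑A)) := by
    intro A
    rw [coordSpan, ← LinearEquiv.coe_coe, ← Submodule.map_coe, Submodule.map_span, Set.image_image, LinearEquiv.coe_coe]
    have himg2 : (fun x => e (Pi.single x 1)) '' (↑A : Set (Fin 7)) = w '' ↑A :=
      Set.image_congr fun i _ => he i
    rw [himg2]
  have hA1 : ((fun i => Pi.single i (1:ℂ)) : Fin 7 → (Fin 7 → ℂ)) = fun i => Pi.single i 1 := rfl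
  have himW : ⇑e '' ↑(coordSpan ↑({0,1,2} : Finset (Fin 7))) = ↑W := by
    rw [himage]
    have : w '' ↑({0,1,2} : Finset (Fin 7)) = {w 0, w 1, w 2} := by
      have hc : (↑({0,1,2} : Finset (Fin 7)) : Set (Fin 7)) = {0, 1, 2} := by simp
      rw [hc, Set.image_insert_eq, Set.image_insert_eq, Set.image_singleton]
    rw [this]
    have h0 : w 0 = v0 := rfl
    have h1 : w 1 = x1 := rfl
    have h2 : w 2 = x2 := rfl
    rw [h0, h1, h2, ← hWspan]
  have himW' : ⇑e '' ↑(coordSpan ↑({0,3,4} : Finset (Fin 7))) = ↑W' := by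
    rw [himage]
    have : w '' ↑({0,3,4} : Finset (Fin 7)) = {w 0, w 3, w 4} := by
      have hc : (↑({0,3,4} : Finset (Fin 7)) : Set (Fin 7)) = {0, 3, 4} := by simp
      rw [hc, Set.image_insert_eq, Set.image_insert_eq, Set.image_singleton]
    rw [this]
    have h0 : w 0 = v0 := rfl
    have h3 : w 3 = y1 := rfl
    have h4 : w 4 = y2 := rfl
    rw [h0, h3, h4, ← hW'span]
  -- now transport
  rw [show (↑W ∪ ↑W' : Set (Fin 7 → ℂ))
      = ⇑e '' (↑(coordSpan ↑({0,1,2} : Finset (Fin 7))) ∪ ↑(coordSpan ↑({0,3,4} : Finset (Fin 7)))) by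
    rw [Set.image_union, himW, himW']]
  rw [show (↑W : Set (Fin 7 → ℂ)) = ⇑e '' ↑(coordSpan ↑({0,1,2} : Finset (Fin 7))) from himW.symm]
  rw [finrank_inf_vanishing_image, finrank_inf_vanishing_image]
  rw [struct ({0,1,2} : Finset (Fin 7)) ({0,3,4} : Finset (Fin 7))]
  rw [show (↑(coordSpan ↑({0,1,2} : Finset (Fin 7))) : Set (Fin 7 → ℂ))
      = ↑(coordSpan ↑({0,1,2} : Finset (Fin 7))) ∪ ↑(coordSpan ↑({0,1,2} : Finset (Fin 7)))
    from (Set.union_self _).symm]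
  rw [struct ({0,1,2} : Finset (Fin 7)) ({0,1,2} : Finset (Fin 7))]
  rw [finrank_span_mono2 _ (fun p hp => (Finset.mem_filter.mp hp).2.1),
    finrank_span_mono2 _ (fun p hp => (Finset.mem_filter.mp hp).2.1)]
  rw [card22, card17]

/-- STATEMENT 3: if `P = ℙ(W)`, `P' = ℙ(W')` are distinct planes in `ℙ⁶` meeting in exactly one point
(`dim(W ∩ W') = 1`), then the quadratic forms vanishing on both `P` and `P'` have
codimension 5 inside those vanishing on `P`. -/
theorem stmt_5 (W W' : Submodule ℂ (Fin 7 → ℂ))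
    (hW : Module.finrank ℂ W = 3) (hW' : Module.finrank ℂ W' = 3) (hne : W ≠ W')
    (hint : Module.finrank ℂ ↥(W ⊓ W') = 1) :
    Module.finrank ℂ
        ((homogeneousSubmodule (Fin 7) ℂ 2) ⊓ vanishingOn 7 (↑W) : Submodule ℂ _) =
      Module.finrank ℂ
        ((homogeneousSubmodule (Fin 7) ℂ 2) ⊓ vanishingOn 7 (↑W ∪ ↑W') : Submodule ℂ _)
        + 5 := stmt_5' W W' hW hW' hne hint
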